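/- Let a > 1 and set g = √(a²−1). The Jacobian matrix of the vector field F(x,y,pₓ,p_y) = (pₓ, p_y, −2x + a·((x+1)/√((x+1)²+y²) + (x−1)/√((x−1)²+y²)), −2y + a·y·(1/√((x+1)²+y²) + 1/√((x−1)²+y²))) at the equilibrium point (0, g, 0, 0) is the 4×4 real matrix J with rows (0,0,1,0), (0,0,0,1), (−2/a², 0, 0, 0), (0, −2(a²−1)/a², 0, 0), and the characteristic polynomial of J equals (t² + 2/a²)·(t² + 2(a²−1)/a²); in particular the eigenvalues of J (over ℂ) are ±i·√2/a and ±i·√(2(a²−1))/a, all purely imaginary. -/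

import Mathlib

set_option maxHeartbeats 1000000 in
theorem my_det_fin_four {R : Type*} [CommRing R] (M : Matrix (Fin 4) (Fin 4) R) :
    M.det =
      M 0 0 * (M 1 1 * (M 2 2 * M 3 3 - M 2 3 * M 3 2) - M 1 2 * (M 2 1 * M 3 3 - M 2 3 * M 3 1)
        + M 1 3 * (M 2 1 * M 3 2 - M 2 2 * M 3 1))
      - M 0 1 * (M 1 0 * (M 2 2 * M 3 3 - M 2 3 * M 3 2) - M 1 2 * (M 2 0 * M 3 3 - M 2 3 * M 3 0)
        + M 1 3 * (M 2 0 * M 3 2 - M 2 2 * M 3 0))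
      + M 0 2 * (M 1 0 * (M 2 1 * M 3 3 - M 2 3 * M 3 1) - M 1 1 * (M 2 0 * M 3 3 - M 2 3 * M 3 0)
        + M 1 3 * (M 2 0 * M 3 1 - M 2 1 * M 3 0))
      - M 0 3 * (M 1 0 * (M 2 1 * M 3 2 - M 2 2 * M 3 1) - M 1 1 * (M 2 0 * M 3 2 - M 2 2 * M 3 0)
        + M 1 2 * (M 2 0 * M 3 1 - M 2 1 * M 3 0)) := by
  simp only [Matrix.det_succ_row_zero, Fin.sum_univ_succ, Fin.sum_univ_zero,
    Matrix.det_fin_zero, Matrix.submatrix_apply]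
  norm_num [Fin.succAbove, Fin.lt_def]
  simp only [show (Fin.succ 2 : Fin 4) = 3 from rfl, show ((2 : Fin 3).castSucc = (2 : Fin 4)) from rfl]
  ring

set_option maxHeartbeats 2000000 in
/-- For `a > 1` and `g = √(a²−1)`, the Jacobian matrix of the vector field
`F` at the equilibrium `(0, g, 0, 0)` is
`J = [[0,0,1,0],[0,0,0,1],[−2/a²,0,0,0],[0,−2(a²−1)/a²,0,0]]`, its characteristic
polynomial is `(t² + 2/a²)(t² + 2(a²−1)/a²)`, and its eigenvalues over `ℂ` are
`±i√2/a` and `±i√(2(a²−1))/a`, all purely imaginary. -/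
theorem jacobian_at_equilibrium (a : ℝ) (ha : 1 < a) (g : ℝ)
    (hg : g = Real.sqrt (a ^ 2 - 1))
    (F : (Fin 4 → ℝ) → (Fin 4 → ℝ))
    (hF : ∀ v : Fin 4 → ℝ, F v =
      ![v 2, v 3,
        -2 * v 0 + a * ((v 0 + 1) / Real.sqrt ((v 0 + 1) ^ 2 + (v 1) ^ 2) +
          (v 0 - 1) / Real.sqrt ((v 0 - 1) ^ 2 + (v 1) ^ 2)),
        -2 * v 1 + a * v 1 * (1 / Real.sqrt ((v 0 + 1) ^ 2 + (v 1) ^ 2) +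
          1 / Real.sqrt ((v 0 - 1) ^ 2 + (v 1) ^ 2))])
    (J : Matrix (Fin 4) (Fin 4) ℝ)
    (hJ : J = !![0, 0, 1, 0;
                 0, 0, 0, 1;
                 -2 / a ^ 2, 0, 0, 0;
                 0, -2 * (a ^ 2 - 1) / a ^ 2, 0, 0]) :
    (fderiv ℝ F ![0, g, 0, 0]).toLinearMap = Matrix.toLin' J ∧
    J.charpoly = (Polynomial.X ^ 2 + Polynomial.C (2 / a ^ 2)) *
      (Polynomial.X ^ 2 + Polynomial.C (2 * (a ^ 2 - 1) / a ^ 2)) ∧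
    spectrum ℂ (J.map (fun x => (x : ℂ))) =
      {Complex.I * (Real.sqrt 2 / a), -(Complex.I * (Real.sqrt 2 / a)),
       Complex.I * (Real.sqrt (2 * (a ^ 2 - 1)) / a),
       -(Complex.I * (Real.sqrt (2 * (a ^ 2 - 1)) / a))} ∧
    (∀ z ∈ spectrum ℂ (J.map (fun x => (x : ℂ))), z.re = 0) := by
  have hspec :
      spectrum ℂ (J.map (fun x => (x : ℂ))) =
        {Complex.I * (Real.sqrt 2 / a), -(Complex.I * (Real.sqrt 2 / a)),
         Complex.I * (Real.sqrt (2 * (a ^ 2 - 1)) / a),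
         -(Complex.I * (Real.sqrt (2 * (a ^ 2 - 1)) / a))} ∧
      (∀ z ∈ spectrum ℂ (J.map (fun x => (x : ℂ))), z.re = 0) := by
    have ha0 : (a : ℂ) ≠ 0 := by
      exact_mod_cast ne_of_gt (by positivity : (0:ℝ) < a)
    have ha1 : (0:ℝ) ≤ a ^ 2 - 1 := by nlinarith
    set w₁ : ℂ := Complex.I * (Real.sqrt 2 / a) with hw₁
    set w₂ : ℂ := Complex.I * (Real.sqrt (2 * (a ^ 2 - 1)) / a) with hw₂
    have hw₁sq : w₁ ^ 2 = -((2 / a ^ 2 : ℝ) : ℂ) := by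
      rw [hw₁, sq]
      have key : ((Real.sqrt 2 : ℝ) : ℂ) ^ 2 = ((2:ℝ) : ℂ) := by
        rw [← Complex.ofReal_pow, Real.sq_sqrt (by norm_num)]
      calc Complex.I * ((Real.sqrt 2 : ℝ) / (a:ℂ)) * (Complex.I * ((Real.sqrt 2 : ℝ) / (a:ℂ)))
          = Complex.I ^ 2 * (((Real.sqrt 2 : ℝ):ℂ) ^ 2 / (a:ℂ) ^ 2) := by ring
        _ = -((2 / a ^ 2 : ℝ) : ℂ) := by rw [Complex.I_sq, key]; push_cast; ring
    have hw₂sq : w₂ ^ 2 = -((2 * (a ^ 2 - 1) / a ^ 2 : ℝ) : ℂ) := by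
      rw [hw₂, sq]
      have key : ((Real.sqrt (2 * (a ^ 2 - 1)) : ℝ) : ℂ) ^ 2 = ((2 * (a ^ 2 - 1) : ℝ) : ℂ) := by
        rw [← Complex.ofReal_pow, Real.sq_sqrt (by linarith)]
      calc Complex.I * ((Real.sqrt (2 * (a ^ 2 - 1)) : ℝ) / (a:ℂ)) * (Complex.I * ((Real.sqrt (2 * (a ^ 2 - 1)) : ℝ) / (a:ℂ)))
          = Complex.I ^ 2 * (((Real.sqrt (2 * (a ^ 2 - 1)) : ℝ):ℂ) ^ 2 / (a:ℂ) ^ 2) := by ring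
        _ = -((2 * (a ^ 2 - 1) / a ^ 2 : ℝ) : ℂ) := by rw [Complex.I_sq, key]; push_cast; ring
    have hdet : ∀ z : ℂ, (algebraMap ℂ (Matrix (Fin 4) (Fin 4) ℂ) z - J.map (fun x => (x : ℂ))).det
        = (z - w₁) * (z + w₁) * ((z - w₂) * (z + w₂)) := by
      intro z
      rw [my_det_fin_four]
      simp [Matrix.sub_apply, Matrix.algebraMap_matrix_apply, Matrix.map_apply, hJ,
        Matrix.vecHead, Matrix.vecTail]
      have expand : (z - w₁) * (z + w₁) * ((z - w₂) * (z + w₂))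
          = (z ^ 2 - w₁ ^ 2) * (z ^ 2 - w₂ ^ 2) := by ring
      rw [expand, hw₁sq, hw₂sq]
      push_cast
      ring
    have hmem : ∀ z : ℂ, z ∈ spectrum ℂ (J.map (fun x => (x : ℂ))) ↔
        (z = w₁ ∨ z = -w₁) ∨ (z = w₂ ∨ z = -w₂) := by
      intro z
      rw [spectrum.mem_iff, Matrix.isUnit_iff_isUnit_det, isUnit_iff_ne_zero, not_not, hdet z]
      simp [mul_eq_zero, sub_eq_zero, add_eq_zero_iff_eq_neg]
    constructor
    · ext z
      rw [hmem z]
      simp [Set.mem_insert_iff, or_assoc]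
    · intro z hz
      rcases (hmem z).1 hz with (rfl | rfl) | (rfl | rfl) <;>
        simp [hw₁, hw₂, Complex.mul_re, Complex.div_re, Complex.div_im]
  have hcharpoly : J.charpoly = (Polynomial.X ^ 2 + Polynomial.C (2 / a ^ 2)) *
      (Polynomial.X ^ 2 + Polynomial.C (2 * (a ^ 2 - 1) / a ^ 2)) := by
    clear hspec
    rw [show (-2/a^2 : ℝ) = -(2/a^2) by ring,
        show (-2*(a^2-1)/a^2 : ℝ) = -(2*(a^2-1)/a^2) by ring] at hJ
    subst hJ
    rw [Matrix.charpoly, my_det_fin_four]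
    simp [Matrix.charmatrix_apply, Matrix.diagonal_apply, map_neg, Matrix.vecHead, Matrix.vecTail]
    ring
  refine ⟨?_, hcharpoly, hspec.1, hspec.2⟩
  clear hspec hcharpoly
  have hF' : F = fun v => ![v 2, v 3,
        -2 * v 0 + a * ((v 0 + 1) / Real.sqrt ((v 0 + 1) ^ 2 + (v 1) ^ 2) +
          (v 0 - 1) / Real.sqrt ((v 0 - 1) ^ 2 + (v 1) ^ 2)),
        -2 * v 1 + a * v 1 * (1 / Real.sqrt ((v 0 + 1) ^ 2 + (v 1) ^ 2) +
          1 / Real.sqrt ((v 0 - 1) ^ 2 + (v 1) ^ 2))] := funext hF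
  subst hF'
  set p : Fin 4 → ℝ := ![0, g, 0, 0] with hp
  have ha0 : (0:ℝ) < a := by linarith
  have hg2 : g ^ 2 = a ^ 2 - 1 := by
    rw [hg]; exact Real.sq_sqrt (by nlinarith)
  have hg0 : 0 ≤ g := hg ▸ Real.sqrt_nonneg _
  have hp0 : p 0 = 0 := rfl
  have hp1 : p 1 = g := rfl
  have hqPp : (p 0 + 1) * (p 0 + 1) + p 1 * p 1 = a ^ 2 := by
    rw [hp0, hp1]; nlinarith
  have hqMp : (p 0 - 1) * (p 0 - 1) + p 1 * p 1 = a ^ 2 := by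
    rw [hp0, hp1]; nlinarith
  have hsa : Real.sqrt (a ^ 2) = a := Real.sqrt_sq ha0.le
  have hsP' : Real.sqrt (((0:ℝ) + 1) * ((0:ℝ) + 1) + g * g) = a := by
    rw [show ((0:ℝ)+1)*((0:ℝ)+1)+g*g = a^2 by nlinarith, hsa]
  have hsM' : Real.sqrt (((0:ℝ) - 1) * ((0:ℝ) - 1) + g * g) = a := by
    rw [show ((0:ℝ)-1)*((0:ℝ)-1)+g*g = a^2 by nlinarith, hsa]
  have hane : a ≠ 0 := ne_of_gt ha0
  have hs1 : Real.sqrt (1 + g ^ 2) = a := by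
    rw [hg2, show (1:ℝ) + (a ^ 2 - 1) = a ^ 2 by ring, hsa]
  have hqneP : (p 0 + 1) * (p 0 + 1) + p 1 * p 1 ≠ 0 := by rw [hqPp]; positivity
  have hqneM : (p 0 - 1) * (p 0 - 1) + p 1 * p 1 ≠ 0 := by rw [hqMp]; positivity
  have hsneP : Real.sqrt ((p 0 + 1) * (p 0 + 1) + p 1 * p 1) ≠ 0 := by
    rw [hqPp, hsa]; positivity
  have hsneM : Real.sqrt ((p 0 - 1) * (p 0 - 1) + p 1 * p 1) ≠ 0 := by
    rw [hqMp, hsa]; positivity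
  -- basic pieces
  have h0 : HasFDerivAt (fun v : (Fin 4 → ℝ) => v 0) (ContinuousLinearMap.proj (R := ℝ) (φ := fun _ : Fin 4 => ℝ) 0) p :=
    hasFDerivAt_apply 0 p
  have h1 : HasFDerivAt (fun v : (Fin 4 → ℝ) => v 1) (ContinuousLinearMap.proj (R := ℝ) (φ := fun _ : Fin 4 => ℝ) 1) p :=
    hasFDerivAt_apply 1 p
  have hqP := ((h0.add_const 1).mul (h0.add_const 1)).add (h1.mul h1)
  have hqM := ((h0.sub_const 1).mul (h0.sub_const 1)).add (h1.mul h1)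
  have hsP := hqP.sqrt hqneP
  have hsM := hqM.sqrt hqneM
  have hinvP := (hasDerivAt_inv hsneP).comp_hasFDerivAt p hsP
  have hinvM := (hasDerivAt_inv hsneM).comp_hasFDerivAt p hsM
  set L : (Fin 4 → ℝ) →L[ℝ] (Fin 4 → ℝ) := LinearMap.toContinuousLinearMap (Matrix.toLin' J) with hL
  have hmain : HasFDerivAt (fun v => ![v 2, v 3,
        -2 * v 0 + a * ((v 0 + 1) / Real.sqrt ((v 0 + 1) ^ 2 + (v 1) ^ 2) +
          (v 0 - 1) / Real.sqrt ((v 0 - 1) ^ 2 + (v 1) ^ 2)),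
        -2 * v 1 + a * v 1 * (1 / Real.sqrt ((v 0 + 1) ^ 2 + (v 1) ^ 2) +
          1 / Real.sqrt ((v 0 - 1) ^ 2 + (v 1) ^ 2))]) L p := by
    rw [hasFDerivAt_pi']
    intro i
    fin_cases i
    · simp only [Matrix.cons_val_zero]
      refine (hasFDerivAt_apply 2 p).congr_fderiv ?_
      ext w
      simp [hL, Matrix.toLin'_apply, Matrix.mulVec, dotProduct, Fin.sum_univ_four, hJ]
    · simp only [Matrix.cons_val_one, Matrix.head_cons]
      refine (hasFDerivAt_apply 3 p).congr_fderiv ?_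
      ext w
      simp [hL, Matrix.toLin'_apply, Matrix.mulVec, dotProduct, Fin.sum_univ_four, hJ]
    · simp only [Matrix.cons_val_two, Matrix.tail_cons, Matrix.head_cons, pow_two,
        div_eq_mul_inv]
      refine HasFDerivAt.congr_fderiv
        ((h0.const_mul (-2)).add
          ((((h0.add_const 1).mul hinvP).add ((h0.sub_const 1).mul hinvM)).const_mul a)) ?_
      ext w
      simp only [hL, ContinuousLinearMap.add_apply, ContinuousLinearMap.smul_apply,
        ContinuousLinearMap.comp_apply, ContinuousLinearMap.proj_apply,
        LinearMap.coe_toContinuousLinearMap, Matrix.toLin'_apply, Matrix.mulVec,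
        dotProduct, Fin.sum_univ_four, smul_eq_mul, hqPp, hqMp, hsa, hp0, hp1, hJ,
        Function.comp, LinearMap.coe_toContinuousLinearMap']
      simp only [hp, Matrix.cons_val_zero, Matrix.cons_val_one, Matrix.head_cons, hsP', hsM']
      norm_num [Fin.isValue, hs1, Matrix.cons_val_two, Matrix.cons_val_three, Matrix.tail_cons, Matrix.head_cons]
      field_simp
      ring_nf
      rw [hs1]
      ring
    · simp only [Matrix.cons_val_three, Matrix.tail_cons, Matrix.head_cons, pow_two,
        div_eq_mul_inv, one_mul]
      refine HasFDerivAt.congr_fderiv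
        ((h1.const_mul (-2)).add
          ((h1.const_mul a).mul (hinvP.add hinvM))) ?_
      ext w
      simp only [hL, ContinuousLinearMap.add_apply, ContinuousLinearMap.smul_apply,
        ContinuousLinearMap.comp_apply, ContinuousLinearMap.proj_apply,
        LinearMap.coe_toContinuousLinearMap, Matrix.toLin'_apply, Matrix.mulVec,
        dotProduct, Fin.sum_univ_four, smul_eq_mul, hqPp, hqMp, hsa, hp0, hp1, hJ,
        Function.comp, LinearMap.coe_toContinuousLinearMap']
      simp only [hp, Matrix.cons_val_zero, Matrix.cons_val_one, Matrix.head_cons, hsP', hsM']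
      norm_num [Fin.isValue, hs1, Matrix.cons_val_two, Matrix.cons_val_three, Matrix.tail_cons, Matrix.head_cons]
      field_simp
      ring_nf
      rw [hs1]
      linear_combination (-4 * a * w 1) * hg2
  rw [hmain.fderiv]
  exact LinearMap.coe_toContinuousLinearMap _
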